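/- Let m ∈ ℕ, m ≥ 1, and δ > 0, and let α : ZMod m → ℝ satisfy α(q−1) ≤ α(q) + δ for all q ∈ ZMod m. Let ᾱ := (Σ_{q ∈ ZMod m} α(q)) / m be the mean. Then α(q) ∈ [ᾱ − ((m−1)/2)·δ, ᾱ + ((m−1)/2)·δ] for every q ∈ ZMod m. The same conclusion holds if instead α(q+1) ≤ α(q) + δ for all q ∈ ZMod m. -/

import Mathlib

lemma sum_val_zmod (m : ℕ) [NeZero m] :
    (∑ x : ZMod m, (x.val : ℝ)) = m * (m - 1) / 2 := by
  obtain ⟨n, rfl⟩ := Nat.exists_eq_succ_of_ne_zero (NeZero.ne m)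
  have : (∑ x : ZMod (n+1), (x.val : ℝ)) = ∑ i : Fin (n+1), (i.val : ℝ) := rfl
  rw [this, Fin.sum_univ_eq_sum_range]
  have h2 : ((∑ i ∈ Finset.range (n+1), i : ℕ) : ℝ) * 2 = (n+1) * n := by
    have := Finset.sum_range_id_mul_two (n+1)
    have := congrArg (Nat.cast : ℕ → ℝ) this
    push_cast at this
    simpa using this
  push_cast at h2 ⊢
  linarith

lemma key (m : ℕ) [NeZero m] (δ : ℝ) (α : ZMod m → ℝ)
    (h : ∀ q : ZMod m, α (q - 1) ≤ α q + δ) :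
    ∀ q : ZMod m,
      α q ∈ Set.Icc ((∑ x : ZMod m, α x) / m - ((m : ℝ) - 1) / 2 * δ)
        ((∑ x : ZMod m, α x) / m + ((m : ℝ) - 1) / 2 * δ) := by
  have step : ∀ k : ℕ, ∀ q : ZMod m, α (q - k) ≤ α q + k * δ := by
    intro k
    induction k with
    | zero => intro q; simp
    | succ k ih =>
      intro q
      have e : q - (↑(k+1) : ZMod m) = (q - 1) - k := by push_cast; ring
      calc α (q - (↑(k+1))) = α ((q-1) - k) := by rw [e]
        _ ≤ α (q - 1) + k * δ := ih _
        _ ≤ α q + δ + k * δ := by linarith [h q]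
        _ = α q + (↑(k+1)) * δ := by push_cast; ring
  intro q
  have hm : (0:ℝ) < m := by exact_mod_cast Nat.pos_of_ne_zero (NeZero.ne m)
  have castval : ∀ x : ZMod m, ((x.val : ZMod m)) = x := by
    intro x; simp [ZMod.natCast_val, ZMod.cast_id]
  have e1 : (∑ x : ZMod m, α x) = ∑ x : ZMod m, α (q - x) :=
    (Fintype.sum_equiv (Equiv.subLeft q) (fun x => α (q - x)) α (fun x => rfl)).symm
  have e2 : (∑ x : ZMod m, α x) = ∑ x : ZMod m, α (q + x) :=
    (Fintype.sum_equiv (Equiv.addLeft q) (fun x => α (q + x)) α (fun x => rfl)).symm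
  have b1 : ∑ x : ZMod m, α (q - x) ≤ ∑ x : ZMod m, (α q + x.val * δ) := by
    apply Finset.sum_le_sum
    intro x _
    have := step x.val q
    rwa [castval x] at this
  have b2 : ∑ x : ZMod m, α q ≤ ∑ x : ZMod m, (α (q + x) + x.val * δ) := by
    apply Finset.sum_le_sum
    intro x _
    have := step x.val (q + x)
    rw [castval x] at this
    simpa using this
  have sδ : (∑ x : ZMod m, (x.val : ℝ) * δ) = m * (m-1) / 2 * δ := by
    rw [← Finset.sum_mul, sum_val_zmod]
  rw [Finset.sum_add_distrib, sδ, Finset.sum_const, Finset.card_univ,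
    ZMod.card, nsmul_eq_mul] at b1
  rw [Finset.sum_add_distrib, sδ, Finset.sum_const, Finset.card_univ,
    ZMod.card, nsmul_eq_mul] at b2
  rw [← e1] at b1
  rw [← e2] at b2
  constructor
  · rw [div_sub' (ne_of_gt hm), div_le_iff₀ hm]
    nlinarith
  · rw [div_add' _ _ _ (ne_of_gt hm), le_div_iff₀ hm]
    nlinarith

/-- If `α : ZMod m → ℝ` satisfies `α(q−1) ≤ α(q) + δ` for all `q` (or `α(q+1) ≤ α(q) + δ`
for all `q`), then every `α(q)` is within `((m−1)/2)·δ` of the mean of `α`. -/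
theorem stmt_17 (m : ℕ) [NeZero m] (δ : ℝ) (hδ : 0 < δ) (α : ZMod m → ℝ)
    (h : (∀ q : ZMod m, α (q - 1) ≤ α q + δ) ∨ (∀ q : ZMod m, α (q + 1) ≤ α q + δ)) :
    ∀ q : ZMod m,
      α q ∈ Set.Icc ((∑ x : ZMod m, α x) / m - ((m : ℝ) - 1) / 2 * δ)
        ((∑ x : ZMod m, α x) / m + ((m : ℝ) - 1) / 2 * δ) := by
  rcases h with h | h
  · exact key m δ α h
  · intro q
    have h' : ∀ p : ZMod m, (fun x => α (-x)) (p - 1) ≤ (fun x => α (-x)) p + δ := by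
      intro p
      have := h (-p)
      simpa [neg_sub, sub_eq_add_neg, add_comm] using this
    have := key m δ (fun x => α (-x)) h' (-q)
    have esum : (∑ x : ZMod m, α (-x)) = ∑ x : ZMod m, α x :=
      Fintype.sum_equiv (Equiv.neg _) _ _ (fun x => rfl)
    simpa [esum] using this
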